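/- Assume n is even, n ≥ 2, a + c ≠ 0 and a − c ≠ 0. Then f has a nonzero periodic point in F_{q^2} whose minimal period is odd if and only if a^2 − c^2 is not a square in F_q. -/

import Mathlib

lemma geo_split (n ℓ : ℕ) : ∀ N : ℕ, ∑ i ∈ Finset.range (ℓ * N), n ^ i =
    (∑ r ∈ Finset.range ℓ, n ^ r) * ∑ b ∈ Finset.range N, (n ^ ℓ) ^ b := by
  intro N
  induction N with
  | zero => simp
  | succ N ih =>
    have h1 : ℓ * (N + 1) = ℓ * N + ℓ := by ring
    rw [h1, Finset.sum_range_add, ih, Finset.sum_range_succ]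
    have h2 : ∀ x, n ^ (ℓ * N + x) = (n ^ ℓ) ^ N * n ^ x := by
      intro x; rw [pow_add, pow_mul]
    simp only [h2, ← Finset.mul_sum]
    ring

lemma geo_block (ℓ : ℕ) (hℓ : ℓ.Prime) : ∀ (e n N : ℕ), 1 ≤ n → ℓ ∣ n - 1 → ℓ ^ e ∣ N →
    ℓ ^ e ∣ ∑ i ∈ Finset.range N, n ^ i := by
  intro e
  induction e with
  | zero => intro n N _ _ _; simpa using one_dvd _
  | succ e ih =>
    intro n N hn hdvd hN
    have hℓ0 : ℓ ≠ 0 := hℓ.ne_zero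
    have hℓN : ℓ ∣ N := dvd_trans (dvd_pow_self ℓ (Nat.succ_ne_zero e)) hN
    obtain ⟨N', rfl⟩ := hℓN
    have hN' : ℓ ^ e ∣ N' := by
      have h := hN
      rw [pow_succ, mul_comm ℓ N'] at h
      exact (mul_dvd_mul_iff_right hℓ0).mp h
    rw [geo_split]
    rw [pow_succ, mul_comm (ℓ^e) ℓ]
    apply mul_dvd_mul
    · -- ℓ ∣ ∑ r < ℓ, n ^ r
      haveI : NeZero ℓ := ⟨hℓ0⟩
      have : ((∑ r ∈ Finset.range ℓ, n ^ r : ℕ) : ZMod ℓ) = 0 := by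
        push_cast
        have hn1 : ((n : ZMod ℓ)) = 1 := by
          have : ((n - 1 : ℕ) : ZMod ℓ) = 0 := (ZMod.natCast_eq_zero_iff _ _).mpr hdvd
          have hcast : ((n - 1 : ℕ) : ZMod ℓ) = (n : ZMod ℓ) - 1 := by
            have : (1:ℕ) ≤ n := hn
            push_cast [Nat.cast_sub this]
            ring
          rw [hcast] at this
          linear_combination this
        simp [hn1]
      exact (ZMod.natCast_eq_zero_iff _ _).mp this
    · apply ih (n ^ ℓ) N' (Nat.one_le_pow _ _ hn) _ hN'
      exact dvd_trans hdvd (by simpa using Nat.sub_dvd_pow_sub_pow n 1 ℓ)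




lemma NT (n m : ℕ) (hn : 2 ≤ n) (he : Even n) (hm : 1 ≤ m) :
    ∃ M : ℕ, 0 < M ∧ Odd M ∧ Nat.gcd (n ^ M - 1) m ∣ ∑ i ∈ Finset.range M, n ^ i := by
  have hn0 : n ≠ 0 := by omega
  have hm0 : m ≠ 0 := by omega
  set g0 := Nat.gcd (n ^ m) m with hg0def
  have hg0m : g0 ∣ m := Nat.gcd_dvd_right _ _
  have hg00 : g0 ≠ 0 := Nat.gcd_ne_zero_right hm0
  set M := m / g0 with hMdef
  have hMg : M * g0 = m := Nat.div_mul_cancel hg0m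
  have hM0 : M ≠ 0 := by
    intro h; rw [h, zero_mul] at hMg; exact hm0 hMg.symm
  have hnm0 : n ^ m ≠ 0 := pow_ne_zero _ hn0
  -- factorization facts
  have hfg0 : ∀ ℓ : ℕ, g0.factorization ℓ = min ((n ^ m).factorization ℓ) (m.factorization ℓ) := by
    intro ℓ
    rw [hg0def, Nat.factorization_gcd hnm0 hm0]
    rfl
  have hfm : ∀ ℓ : ℕ, m.factorization ℓ = M.factorization ℓ + g0.factorization ℓ := by
    intro ℓ
    conv_lhs => rw [← hMg]
    rw [Nat.factorization_mul hM0 hg00]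
    rfl
  have hModd : Odd M := by
    rw [← Nat.not_even_iff_odd]
    intro hev
    have h2M : (2:ℕ) ∣ M := hev.two_dvd
    have h2n : (2:ℕ) ∣ n := he.two_dvd
    have hf2 : (n ^ m).factorization 2 = m * n.factorization 2 := by
      rw [Nat.factorization_pow]; rfl
    have hpos : 0 < n.factorization 2 := Nat.Prime.factorization_pos_of_dvd Nat.prime_two hn0 h2n
    have hle : m.factorization 2 ≤ m * n.factorization 2 := by
      calc m.factorization 2 ≤ m := le_of_lt (Nat.factorization_lt 2 hm0)
        _ = m * 1 := (mul_one m).symm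
        _ ≤ m * n.factorization 2 := Nat.mul_le_mul_left m hpos
    have hg02 : g0.factorization 2 = m.factorization 2 := by
      rw [hfg0 2, hf2]; omega
    have hM2 : 0 < M.factorization 2 := Nat.Prime.factorization_pos_of_dvd Nat.prime_two hM0 h2M
    have := hfm 2
    omega
  refine ⟨M, Nat.pos_of_ne_zero hM0, hModd, ?_⟩
  set A := n ^ M - 1 with hAdef
  set S := ∑ i ∈ Finset.range M, n ^ i with hSdef
  have hnM1 : 1 ≤ n ^ M := Nat.one_le_pow _ _ (by omega)
  have hnM2 : 2 ≤ n ^ M := le_trans hn (Nat.le_self_pow hM0 n)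
  have hA0 : A ≠ 0 := by omega
  have hS0 : S ≠ 0 := by
    have : 0 < S := Finset.sum_pos (fun i _ => pow_pos (by omega) i)
      (Finset.nonempty_range_iff.mpr hM0)
    omega
  have hn10 : n - 1 ≠ 0 := by omega
  have hprod : S * (n - 1) = A := by
    have hz := geom_sum_mul (n : ℤ) M
    have : ((S * (n-1) : ℕ) : ℤ) = ((A : ℕ) : ℤ) := by
      push_cast [Nat.cast_sub (by omega : 1 ≤ n), Nat.cast_sub hnM1, hSdef, hAdef]
      exact hz
    exact_mod_cast this
  have hgcd0 : Nat.gcd A m ≠ 0 := Nat.gcd_ne_zero_right hm0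
  rw [← Nat.factorization_le_iff_dvd hgcd0 hS0]
  intro ℓ
  by_cases hℓp : ℓ.Prime
  · have hmin : (Nat.gcd A m).factorization ℓ = min (A.factorization ℓ) (m.factorization ℓ) := by
      rw [Nat.factorization_gcd hA0 hm0]; rfl
    by_cases hcase : ℓ ∣ (n - 1)
    · -- show m.factorization ℓ ≤ S.factorization ℓ
      have hℓn : ¬ ℓ ∣ n := by
        intro hd
        have : ℓ ∣ 1 := by
          have := Nat.dvd_sub hd hcase
          simpa [Nat.sub_sub_self (by omega : 1 ≤ n)] using this
        exact hℓp.one_lt.ne' (Nat.dvd_one.mp this)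
      have hnf : n.factorization ℓ = 0 := Nat.factorization_eq_zero_of_not_dvd hℓn
      have hg0f : g0.factorization ℓ = 0 := by
        rw [hfg0 ℓ, Nat.factorization_pow]
        simp [hnf]
      have hmM : m.factorization ℓ = M.factorization ℓ := by rw [hfm ℓ, hg0f, add_zero]
      have hdS : ℓ ^ (M.factorization ℓ) ∣ S := by
        apply geo_block ℓ hℓp _ n M (by omega) hcase (Nat.ordProj_dvd M ℓ)
      have : M.factorization ℓ ≤ S.factorization ℓ :=
        (Nat.Prime.pow_dvd_iff_le_factorization hℓp hS0).mp hdS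
      rw [hmin, hmM]
      omega
    · have hAf : A.factorization ℓ = S.factorization ℓ := by
        rw [← hprod, Nat.factorization_mul hS0 hn10]
        have : (n-1).factorization ℓ = 0 := Nat.factorization_eq_zero_of_not_dvd hcase
        simp [this]
      rw [hmin, hAf]
      omega
  · rw [Nat.factorization_eq_zero_of_not_prime _ hℓp]
    exact Nat.zero_le _


theorem stmt_3 (p s q : ℕ) (hp : p.Prime) (hpodd : p ≠ 2) (hs : 0 < s) (hq : q = p ^ s)
    (F : Type*) [Field F] [Fintype F] (hF : Fintype.card F = q ^ 2)
    (a c : F) (ha : a ^ q = a) (hc : c ^ q = c)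
    (n : ℕ) (hn2 : 2 ≤ n) (hneven : Even n)
    (h1 : a + c ≠ 0) (h2 : a - c ≠ 0)
    (f : F → F) (hf : ∀ X, f X = (c * X ^ q + a * X) * (X ^ q - X) ^ (n - 1)) :
    (∃ X : F, X ≠ 0 ∧ Odd (Function.minimalPeriod f X)) ↔
      ¬ ∃ y : F, y ^ q = y ∧ y ^ 2 = a ^ 2 - c ^ 2 := by
  haveI := Fact.mk hp
  -- basic numeric facts
  have hp3 : 3 ≤ p := by have := hp.two_le; omega
  have hq3 : 3 ≤ q := by
    calc (3:ℕ) ≤ p := hp3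
    _ ≤ p ^ s := Nat.le_self_pow (by omega) p
    _ = q := hq.symm
  have hqodd : Odd q := by rw [hq]; exact (hp.odd_of_ne_two hpodd).pow
  have hn1odd : Odd (n - 1) := Nat.Even.sub_odd (by omega) hneven odd_one
  have hn10 : n - 1 ≠ 0 := by omega
  have hq0 : q ≠ 0 := by omega
  -- characteristic
  haveI hchar : CharP F p := by
    obtain ⟨p', hcp'⟩ := CharP.exists F
    haveI := hcp'
    have hprime : p'.Prime := by
      rcases CharP.char_is_prime_or_zero F p' with h | h
      · exact h
      · exact absurd h (CharP.char_ne_zero_of_finite F p')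
    obtain ⟨k, _, hk2⟩ := FiniteField.card F p'
    have hd : p' ∣ p ^ (s * 2) := by
      have h0 : p' ∣ p' ^ (k : ℕ) := dvd_pow_self _ (by exact_mod_cast k.pos.ne')
      rw [← hk2] at h0
      rwa [hF, hq, ← pow_mul] at h0
    have : p' = p := (Nat.prime_dvd_prime_iff_eq hprime hp).mp (hprime.dvd_of_dvd_pow hd)
    rwa [this] at hcp'
  have htwo : (2 : F) ≠ 0 := by
    intro h
    have h2 : ((2:ℕ) : F) = 0 := by exact_mod_cast h
    have hdvd := (CharP.cast_eq_zero_iff F p 2).mp h2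
    have := Nat.le_of_dvd (by norm_num) hdvd
    omega
  -- Frobenius-type facts
  have hadd : ∀ x y : F, (x + y) ^ q = x ^ q + y ^ q := by
    intro x y; rw [hq]; exact add_pow_char_pow x y p s
  have hneg : ∀ x : F, (-x) ^ q = -(x ^ q) := fun x => hqodd.neg_pow x
  have hsub : ∀ x y : F, (x - y) ^ q = x ^ q - y ^ q := by
    intro x y
    rw [sub_eq_add_neg, hadd, hneg, sub_eq_add_neg]
  have hqq : ∀ x : F, (x ^ q) ^ q = x := by
    intro x
    rw [← pow_mul, ← pow_two, ← hF]
    exact FiniteField.pow_card x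
  have hf0 : f 0 = 0 := by
    rw [hf]
    simp [zero_pow hq0]
  have KEY : ∀ x : F, (f x) ^ q = -((c * x + a * x ^ q) * (x ^ q - x) ^ (n - 1)) := by
    intro x
    rw [hf, mul_pow, pow_right_comm]
    have e1 : (c * x ^ q + a * x) ^ q = c * x + a * x ^ q := by
      rw [hadd, mul_pow, mul_pow, hqq, ha, hc]
    have e2 : (x ^ q - x) ^ q = -(x ^ q - x) := by
      rw [hsub, hqq]; ring
    rw [e1, e2, hn1odd.neg_pow]
    ring
  constructor
  · -- odd periodic point → no square root
    rintro ⟨X, hX0, hXodd⟩ ⟨y, hyq, hy2⟩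
    set k := Function.minimalPeriod f X with hkdef
    have hk : f^[k] X = X := Function.iterate_minimalPeriod
    have hk1 : 1 ≤ k := hXodd.pos
    -- every iterate is nonzero
    have C1 : ∀ j : ℕ, f^[j] X ≠ 0 := by
      intro j hj0
      have hper : f^[k * (j + 1)] X = X := Function.IsPeriodicPt.mul_const hk (j+1)
      have harith : k * (j + 1) = (k * (j + 1) - j) + j := by
        have : j + 1 ≤ k * (j+1) := Nat.le_mul_of_pos_left _ hk1
        omega
      rw [harith, Function.iterate_add_apply, hj0, Function.iterate_fixed hf0] at hper
      exact hX0 hper.symm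
    have C2 : ∀ j : ℕ, (f^[j] X) ^ q ≠ f^[j] X := by
      intro j hj
      apply C1 (j + 1)
      rw [Function.iterate_succ_apply', hf, hj]
      simp [zero_pow hn10]
    have C3 : ∀ j : ℕ, c * (f^[j] X) ^ q + a * (f^[j] X) ≠ 0 := by
      intro j hj
      apply C1 (j + 1)
      rw [Function.iterate_succ_apply', hf, hj]
      simp
    set u : ℕ → F := fun j => (f^[j] X) ^ q / (f^[j] X) with hudef
    have Egen : ∀ x : F, x ≠ 0 → f x ≠ 0 →
        (f x) ^ q / (f x) * (c * (x ^ q / x) + a) = -(a * (x ^ q / x) + c) := by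
      intro x hx0 hfx0
      have e1 : (f x) ^ q * (c * x ^ q + a * x) = -((c * x + a * x ^ q) * (f x)) := by
        rw [KEY x, hf x]
        ring
      field_simp
      linear_combination e1
    have E : ∀ j : ℕ, u (j + 1) * (c * u j + a) = -(a * u j + c) := by
      intro j
      have hx0 := C1 j
      have hfx0 : f (f^[j] X) ≠ 0 := by
        rw [← Function.iterate_succ_apply' f j X]; exact C1 (j + 1)
      have := Egen (f^[j] X) hx0 hfx0
      rw [← Function.iterate_succ_apply' f j X] at this
      exact this
    have D : ∀ j : ℕ, c * u j + a ≠ 0 := by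
      intro j hj
      apply C3 j
      have hx0 := C1 j
      have heq : c * (f^[j] X) ^ q + a * (f^[j] X) = (c * u j + a) * (f^[j] X) := by
        rw [hudef]
        field_simp
      rw [heq, hj, zero_mul]
    have hac : a ^ 2 - c ^ 2 ≠ 0 := by
      intro h
      apply mul_ne_zero h1 h2
      linear_combination h
    have INV : ∀ j : ℕ, u (j + 2) = u j := by
      intro j
      have s1 := E j
      have s4 := E (j + 1)
      have s2 : (c * u (j+1) + a) * (c * u j + a) = a ^ 2 - c ^ 2 := by
        linear_combination c * s1
      have s3 : (a * u (j+1) + c) * (c * u j + a) = -((a ^ 2 - c ^ 2) * u j) := by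
        linear_combination a * s1
      have s5 : (a ^ 2 - c ^ 2) * u (j + 2) = (a ^ 2 - c ^ 2) * u j := by
        linear_combination (-(u (j+2))) * s2 + (c * u j + a) * s4 - s3
      exact mul_left_cancel₀ hac s5
    have hodd1 : ∀ r : ℕ, u (2 * r + 1) = u 1 := by
      intro r
      induction r with
      | zero => rfl
      | succ r ih =>
        have : 2 * (r + 1) + 1 = (2 * r + 1) + 2 := by ring
        rw [this, INV, ih]
    have huk : u k = u 0 := by
      rw [hudef]
      simp only []
      rw [show f^[k] X = X from hk]
      rfl
    obtain ⟨r, hr⟩ := hXodd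
    have hu10 : u 1 = u 0 := by
      rw [← hodd1 r, ← hr]; exact huk
    set U := u 0 with hUdef
    have REL : c * U ^ 2 + 2 * a * U + c = 0 := by
      have := E 0
      rw [hu10] at this
      linear_combination this
    have hXq0 : (X : F) ^ q ≠ 0 := pow_ne_zero _ hX0
    have hU0 : U ^ q * U = 1 := by
      rw [hUdef, hudef]
      simp only [Function.iterate_zero_apply]
      rw [div_pow, hqq]
      field_simp
    have hUne0 : U ≠ 0 := by
      intro h; rw [h, mul_zero] at hU0; exact zero_ne_one hU0
    by_cases hc0 : c = 0
    · have ha0 : a ≠ 0 := by rwa [hc0, add_zero] at h1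
      rw [hc0] at REL
      have : 2 * a * U = 0 := by linear_combination REL
      rcases mul_eq_zero.mp this with h | h
      · rcases mul_eq_zero.mp h with h' | h'
        · exact htwo h'
        · exact ha0 h'
      · exact hUne0 h
    · -- c ≠ 0
      have hsq : (c * U + a) ^ 2 = y ^ 2 := by
        linear_combination c * REL - hy2
      have hfac : (c * U + a - y) * (c * U + a + y) = 0 := by
        linear_combination hsq
      have hUqU : U ^ q = U := by
        have hyqn : (-y) ^ q = -y := by rw [hneg, hyq]
        have hpowq : (c * U + a) ^ q = c * U ^ q + a := by
          rw [hadd, mul_pow, hc, ha]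
        rcases mul_eq_zero.mp hfac with h | h
        · have hval : c * U + a = y := by linear_combination h
          have : c * U ^ q + a = c * U + a := by
            rw [← hpowq, hval, hyq]
          exact mul_left_cancel₀ hc0 (by linear_combination this)
        · have hval : c * U + a = -y := by linear_combination h
          have : c * U ^ q + a = c * U + a := by
            rw [← hpowq, hval, hyqn]
          exact mul_left_cancel₀ hc0 (by linear_combination this)
      have hU2 : (U - 1) * (U + 1) = 0 := by
        rw [hUqU] at hU0
        linear_combination hU0
      rcases mul_eq_zero.mp hU2 with h | h
      · -- U = 1 means X^q = X
        have hU1 : U = 1 := by linear_combination h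
        apply C2 0
        simp only [Function.iterate_zero_apply]
        have := hU1
        rw [hUdef, hudef] at this
        simp only [Function.iterate_zero_apply] at this
        exact (div_eq_one_iff_eq hX0).mp this
      · have hU1 : U = -1 := by linear_combination h
        rw [hU1] at REL
        apply h2
        have : (2:F) * (c - a) = 0 := by linear_combination REL
        rcases mul_eq_zero.mp this with h' | h'
        · exact absurd h' htwo
        · linear_combination -h'
  · rintro hns
    -- c ≠ 0
    have hc0 : c ≠ 0 := by
      intro h
      exact hns ⟨a, ha, by rw [h]; ring⟩
    have hz0 : a ^ 2 - c ^ 2 ≠ 0 := by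
      intro h
      exact mul_ne_zero h1 h2 (by linear_combination h)
    have hzq : (a ^ 2 - c ^ 2) ^ q = a ^ 2 - c ^ 2 := by
      rw [hsub (a ^ 2) (c ^ 2), pow_right_comm a 2 q, pow_right_comm c 2 q, ha, hc]
    have hq1sub : q - 1 + 1 = q := by omega
    have powq1 : ∀ z : F, z ≠ 0 → z ^ q = z → z ^ (q - 1) = 1 := by
      intro z hz hzq'
      have h' : z ^ (q - 1) * z = 1 * z := by
        rw [one_mul, ← pow_succ, hq1sub, hzq']
      exact mul_right_cancel₀ hz h'
    have hzpow : (a ^ 2 - c ^ 2) ^ (q - 1) = 1 := powq1 _ hz0 hzq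
    have hchar2 : ringChar F ≠ 2 := by rw [ringChar.eq F p]; exact hpodd
    have hcard2 : Fintype.card F / 2 = (q - 1) * ((q + 1) / 2) := by
      obtain ⟨v, hv⟩ := hqodd
      have e1 : q - 1 = 2 * v := by omega
      have e2 : (q + 1) / 2 = v + 1 := by omega
      have hkey : Fintype.card F = 2 * ((q - 1) * ((q + 1) / 2)) + 1 := by
        rw [hF, e1, e2, hv]
        ring
      rw [hkey, Nat.mul_add_div (by norm_num)]
      simp
    have hIs : IsSquare (a ^ 2 - c ^ 2) := by
      rw [FiniteField.isSquare_iff hchar2 hz0, hcard2, pow_mul, hzpow, one_pow]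
    obtain ⟨δ, hδ⟩ := hIs
    have hδ0 : δ ≠ 0 := by
      intro h
      rw [h, mul_zero] at hδ
      exact hz0 hδ
    have hδq : δ ^ q = -δ := by
      have h2' : δ ^ q * δ ^ q = δ * δ := by
        have h3 : (δ * δ) ^ q = δ * δ := by rw [← hδ, hzq, hδ]
        rw [mul_pow] at h3
        exact h3
      have hsq : (δ ^ q - δ) * (δ ^ q + δ) = 0 := by linear_combination h2'
      rcases mul_eq_zero.mp hsq with h | h
      · exfalso
        refine hns ⟨δ, by linear_combination h, ?_⟩
        rw [hδ]; ring
      · linear_combination h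
    -- the fixed point u of the Möbius involution
    set u : F := (δ - a) / c with hudef
    have hcu : c * u = δ - a := by
      rw [hudef]; field_simp
    have huq : u ^ q = (-δ - a) / c := by
      rw [hudef, div_pow, hsub, hδq, ha, hc]
    have huu : u ^ q * u = 1 := by
      rw [huq, hudef]
      field_simp
      linear_combination hδ
    have hu0 : u ≠ 0 := by
      intro h
      rw [h, mul_zero] at huu
      exact zero_ne_one huu
    have hu1 : u ≠ 1 := by
      intro h
      have e1 : δ - a = c := by rw [h, mul_one] at hcu; linear_combination -hcu
      have e2 : (-δ - a) / c = 1 := by rw [← huq, h, one_pow]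
      have e2' : -δ - a = c := (div_eq_one_iff_eq hc0).mp e2
      have h2δ : (2 : F) * δ = 0 := by linear_combination e1 - e2'
      rcases mul_eq_zero.mp h2δ with h' | h'
      · exact htwo h'
      · exact hδ0 h'
    have hδu : c * u + a = δ := by linear_combination hcu
    -- find X₀ with X₀ ^ (q-1) = u
    obtain ⟨g, hg⟩ := IsCyclic.exists_generator (α := Fˣ)
    have horder : orderOf g = q ^ 2 - 1 := by
      rw [orderOf_eq_card_of_forall_mem_zpowers hg, Nat.card_units,
        Nat.card_eq_fintype_card, hF]
    set uu : Fˣ := Units.mk0 u hu0 with huudef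
    have huuq : uu ^ (q + 1) = 1 := by
      apply Units.ext
      rw [Units.val_pow_eq_pow_val]
      show u ^ (q + 1) = 1
      rw [pow_succ, ← huu]
    obtain ⟨t, ht⟩ := Subgroup.mem_zpowers_iff.mp (hg uu)
    have hdvd : ((q ^ 2 - 1 : ℕ) : ℤ) ∣ t * (q + 1) := by
      rw [← horder]
      apply orderOf_dvd_iff_zpow_eq_one.mpr
      rw [zpow_mul, ht]
      have : uu ^ ((q + 1 : ℕ) : ℤ) = 1 := by
        rw [zpow_natCast, huuq]
      exact_mod_cast this
    have hfact : ((q ^ 2 - 1 : ℕ) : ℤ) = ((q - 1 : ℕ) : ℤ) * ((q + 1 : ℕ) : ℤ) := by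
      have h1' : (1:ℕ) ≤ q := by omega
      have h2' : (1:ℕ) ≤ q ^ 2 := Nat.one_le_pow _ _ (by omega)
      push_cast [Nat.cast_sub h1', Nat.cast_sub h2']
      ring
    obtain ⟨w, hw⟩ := hdvd
    have htw : t = ((q - 1 : ℕ) : ℤ) * w := by
      have hne : ((q + 1 : ℕ) : ℤ) ≠ 0 := by positivity
      apply mul_right_cancel₀ hne
      rw [hfact] at hw
      push_cast at hw ⊢
      linarith [hw]
    set X₀ : F := ((g ^ w : Fˣ) : F) with hX₀def
    have hX00 : X₀ ≠ 0 := Units.ne_zero _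
    have hX0q1 : X₀ ^ (q - 1) = u := by
      have hu : (g ^ w) ^ ((q - 1 : ℕ)) = uu := by
        rw [← zpow_natCast (g ^ w) (q - 1), ← zpow_mul, mul_comm, ← htw, ht]
      calc X₀ ^ (q - 1) = (((g ^ w) ^ ((q - 1 : ℕ)) : Fˣ) : F) := by
            rw [Units.val_pow_eq_pow_val]
        _ = u := by rw [hu]; rfl
    have hX0q : X₀ ^ q = u * X₀ := by
      rw [← hq1sub, pow_succ, hX0q1]
    -- the multiplier μ
    set μ : F := δ * (u - 1) ^ (n - 1) * X₀ ^ (n - 1) with hμdef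
    have hmu0 : μ ≠ 0 :=
      mul_ne_zero (mul_ne_zero hδ0 (pow_ne_zero _ (sub_ne_zero.mpr hu1)))
        (pow_ne_zero _ hX00)
    have hmuq : μ ^ q = μ := by
      have e1 : μ ^ q = (-δ) * ((u ^ q - 1) * (u * X₀)) ^ (n - 1) := by
        rw [hμdef, mul_pow, mul_pow, hδq, pow_right_comm (u - 1), pow_right_comm X₀,
          hsub u 1, one_pow, hX0q, mul_assoc, ← mul_pow]
      have e2 : (u ^ q - 1) * (u * X₀) = -((u - 1) * X₀) := by
        linear_combination X₀ * huu
      rw [e1, e2, hn1odd.neg_pow, mul_pow, hμdef]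
      ring
    have hmum : μ ^ (q - 1) = 1 := powq1 _ hmu0 hmuq
    -- the conjugated dynamics
    set hmap : F → F := fun w' => μ * w' ^ n with hmapdef
    have CONJ : ∀ w' : F, w' ^ q = w' → f (w' * X₀) = hmap w' * X₀ ∧ (hmap w') ^ q = hmap w' := by
      intro w' hw'
      have hnn : w' ^ n = w' ^ (n - 1) * w' := by
        rw [← pow_succ]
        congr 1
        omega
      constructor
      · rw [hf]
        have e1 : (w' * X₀) ^ q = w' * (u * X₀) := by rw [mul_pow, hw', hX0q]
        rw [e1]
        have e2 : c * (w' * (u * X₀)) + a * (w' * X₀) = (δ * w') * X₀ := by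
          linear_combination (w' * X₀) * hδu
        have e3 : w' * (u * X₀) - w' * X₀ = (u - 1) * (w' * X₀) := by ring
        rw [e2, e3, mul_pow, mul_pow]
        show (δ * w') * X₀ * ((u - 1) ^ (n-1) * (w' ^ (n-1) * X₀ ^ (n-1))) = μ * w' ^ n * X₀
        rw [hμdef, hnn]
        ring
      · show (μ * w' ^ n) ^ q = μ * w' ^ n
        rw [mul_pow, hmuq, pow_right_comm, hw']
    have FIT : ∀ j : ℕ, ∀ w' : F, w' ^ q = w' →
        f^[j] (w' * X₀) = (hmap^[j] w') * X₀ ∧ (hmap^[j] w') ^ q = hmap^[j] w' := by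
      intro j
      induction j with
      | zero => intro w' hw'; exact ⟨rfl, hw'⟩
      | succ j ih =>
        intro w' hw'
        obtain ⟨hiter, hfix⟩ := ih w' hw'
        constructor
        · rw [Function.iterate_succ_apply', hiter, Function.iterate_succ_apply',
            (CONJ _ hfix).1]
        · rw [Function.iterate_succ_apply']
          exact (CONJ _ hfix).2
    have ITER : ∀ j : ℕ, ∀ w' : F,
        hmap^[j] w' = μ ^ (∑ i ∈ Finset.range j, n ^ i) * w' ^ (n ^ j) := by
      intro j
      induction j with
      | zero => intro w'; simp
      | succ j ih =>
        intro w'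
        rw [Function.iterate_succ_apply', ih w']
        show μ * (μ ^ (∑ i ∈ Finset.range j, n ^ i) * w' ^ n ^ j) ^ n
            = μ ^ (∑ i ∈ Finset.range (j + 1), n ^ i) * w' ^ n ^ (j + 1)
        rw [geom_sum_succ, pow_add, pow_one, pow_mul, pow_succ n j, pow_mul]
        ring
    -- number theory input
    obtain ⟨M, hM0, hModd, hgcddvd⟩ := NT n (q - 1) hn2 hneven (by omega)
    set S : ℕ := ∑ i ∈ Finset.range M, n ^ i with hSdef
    set A : ℕ := n ^ M - 1 with hAdef
    set G : ℕ := Nat.gcd A (q - 1) with hGdef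
    have hnM1 : 1 ≤ n ^ M := Nat.one_le_pow _ _ (by omega)
    have hS' : ((S : ℕ) : ℤ) = ((G : ℕ) : ℤ) * ((S / G : ℕ) : ℤ) := by
      exact_mod_cast congrArg (fun z : ℕ => (z : ℤ)) (Nat.mul_div_cancel' hgcddvd).symm
    have hA' : ((A : ℕ) : ℤ) = ((n ^ M : ℕ) : ℤ) - 1 := by
      rw [hAdef]
      push_cast [Nat.cast_sub hnM1]
      ring
    have hbez := Nat.gcd_eq_gcd_ab A (q - 1)
    set x : ℤ := Nat.gcdA A (q - 1) with hxdef
    set y0 : ℤ := Nat.gcdB A (q - 1) with hy0def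
    set ν : Fˣ := Units.mk0 μ hmu0 with hνdef
    set Φ : Fˣ →* Fˣ := Units.map (powMonoidHom q : F →* F) with hΦdef
    have hΦval : ∀ w' : Fˣ, ((Φ w' : Fˣ) : F) = ((w' : F)) ^ q := by
      intro w'
      rw [hΦdef, Units.coe_map]
      rfl
    have hΦν : Φ ν = ν := by
      apply Units.ext
      rw [hΦval]
      exact hmuq
    set z : ℤ := -((S / G : ℕ) : ℤ) * x with hzdef
    set lam : Fˣ := ν ^ z with hlamdef
    set lam0 : F := ((lam : Fˣ) : F) with hlam0def
    have hlam00 : lam0 ≠ 0 := Units.ne_zero _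
    have hlam0q : lam0 ^ q = lam0 := by
      have hΦlam : Φ lam = lam := by
        rw [hlamdef, MonoidHom.map_zpow, hΦν]
      calc lam0 ^ q = ((Φ lam : Fˣ) : F) := (hΦval lam).symm
        _ = lam0 := by rw [hΦlam]
    have hνm : ν ^ ((q - 1 : ℕ)) = 1 := by
      apply Units.ext
      rw [Units.val_pow_eq_pow_val]
      exact hmum
    have claim : ν ^ (S : ℕ) * lam ^ ((n : ℕ) ^ M) = lam := by
      have hexp : (S : ℤ) + z * ((n ^ M : ℕ) : ℤ)
          = z + ((q - 1 : ℕ) : ℤ) * (((S / G : ℕ) : ℤ) * y0) := by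
        rw [hzdef]
        linear_combination hS' + ((S / G : ℕ) : ℤ) * hbez + (((S / G : ℕ) : ℤ) * x) * hA'
      calc ν ^ (S : ℕ) * lam ^ ((n : ℕ) ^ M)
          = ν ^ ((S : ℕ) : ℤ) * (ν ^ z) ^ (((n ^ M : ℕ) : ℤ)) := by
            rw [hlamdef, ← zpow_natCast ν S, ← zpow_natCast (ν ^ z) (n ^ M)]
        _ = ν ^ ((S : ℤ) + z * ((n ^ M : ℕ) : ℤ)) := by
            rw [← zpow_mul, ← zpow_add]
        _ = ν ^ z * (ν ^ ((q - 1 : ℕ))) ^ (((S / G : ℕ) : ℤ) * y0) := by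
            rw [hexp, zpow_add]
            congr 1
            rw [← zpow_natCast ν (q - 1), ← zpow_mul]
        _ = lam := by rw [hνm, one_zpow, mul_one, hlamdef]
    have hfixF : μ ^ S * lam0 ^ (n ^ M) = lam0 := by
      have := congrArg (Units.val) claim
      rw [Units.val_mul, Units.val_pow_eq_pow_val, Units.val_pow_eq_pow_val] at this
      exact this
    -- conclude
    refine ⟨lam0 * X₀, mul_ne_zero hlam00 hX00, ?_⟩
    have hper : Function.IsPeriodicPt f M (lam0 * X₀) := by
      show f^[M] (lam0 * X₀) = lam0 * X₀
      rw [(FIT M lam0 hlam0q).1, ITER M lam0, ← hSdef, hfixF]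
    have hdvd2 := hper.minimalPeriod_dvd
    rcases Nat.even_or_odd (Function.minimalPeriod f (lam0 * X₀)) with hev | hod
    · exfalso
      have h2M : 2 ∣ M := dvd_trans hev.two_dvd hdvd2
      rw [← Nat.not_even_iff_odd] at hModd
      exact hModd ((even_iff_two_dvd).mpr h2M)
    · exact hod
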